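/- Algebraic certificate inequality (cross-cluster case): Let t, q, ε be real numbers with 0 < q ≤ t < 1 and ε ≥ 0. If t − q ≥ 2·t·(1−q)·ε, then (1+ε)·√((1−t)/t)·(q/(1−q)) ≤ (1−ε)·√(t/(1−t)). -/

import Mathlib

/-- **Algebraic certificate inequality (cross-cluster case).** If `0 < q ≤ t < 1`, `ε ≥ 0`
and `t − q ≥ 2t(1−q)ε`, then `(1+ε)√((1−t)/t)·(q/(1−q)) ≤ (1−ε)√(t/(1−t))`. -/
theorem certificate_ineq_cross_cluster (t q ε : ℝ)
    (hq : 0 < q) (hqt : q ≤ t) (ht : t < 1) (hε : 0 ≤ ε)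
    (h : t - q ≥ 2 * t * (1 - q) * ε) :
    (1 + ε) * Real.sqrt ((1 - t) / t) * (q / (1 - q)) ≤
      (1 - ε) * Real.sqrt (t / (1 - t)) := by
  have ht0 : 0 < t := lt_of_lt_of_le hq hqt
  have h1t : 0 < 1 - t := by linarith
  have h1q : 0 < 1 - q := by linarith
  set a := Real.sqrt ((1 - t) / t) with ha
  set b := Real.sqrt (t / (1 - t)) with hb
  have hbpos : 0 < b := Real.sqrt_pos.mpr (by positivity)
  have hab : a * b = 1 := by
    rw [ha, hb, ← Real.sqrt_mul (by positivity)]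
    rw [show (1 - t) / t * (t / (1 - t)) = 1 by field_simp]
    exact Real.sqrt_one
  have hb2 : b ^ 2 = t / (1 - t) := Real.sq_sqrt (by positivity)
  have key : (1 + ε) * (q / (1 - q)) ≤ (1 - ε) * (t / (1 - t)) := by
    rw [mul_div_assoc', mul_div_assoc', div_le_div_iff₀ h1q h1t]
    nlinarith
  rw [← mul_le_mul_iff_of_pos_right hbpos]
  calc (1 + ε) * a * (q / (1 - q)) * b
      = (1 + ε) * (q / (1 - q)) * (a * b) := by ring
    _ = (1 + ε) * (q / (1 - q)) := by rw [hab, mul_one]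
    _ ≤ (1 - ε) * (t / (1 - t)) := key
    _ = (1 - ε) * b ^ 2 := by rw [hb2]
    _ = (1 - ε) * b * b := by ring
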